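/- Let τ > 0, let X be a separable reflexive real Banach space and U a real separable Hilbert space, let B : U → X be a bounded linear operator, let R(t,s) ∈ L(X) (0 ≤ s ≤ t ≤ τ) be a strongly continuous, uniformly bounded family, and fix x₀ ∈ X. Let J : X → X* be a duality mapping and define B_τ : X* → X by B_τ x* = ∫₀^τ R(τ,t) B B* R(τ,t)* x* dt. Assume that for every λ > 0 and every x ∈ X there exists z_λ(x) ∈ X with λ z_λ(x) + B_τ(J(z_λ(x))) = λx, ‖z_λ(x)‖_X ≤ ‖x‖_X, and ‖z_λ(x)‖_X → 0 as λ → 0⁺. Then the linear system is approximately controllable on [0,τ]: the set {R(τ,0)x₀ + ∫₀^τ R(τ,s)Bu(s)ds : u ∈ L²([0,τ];U)} is dense in X. -/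

import Mathlib

open MeasureTheory
open scoped RealInnerProductSpace

lemma norm_eq_ciSup_inner {U : Type*} [NormedAddCommGroup U] [InnerProductSpace ℝ U]
    (d : ℕ → U) (hd : DenseRange d) (y : U) :
    ‖y‖ = ⨆ n, ⟪y, (max ‖d n‖ 1)⁻¹ • d n⟫ := by
  set e : ℕ → U := fun n => (max ‖d n‖ 1)⁻¹ • d n with he
  have hmax : ∀ n, (0:ℝ) < max ‖d n‖ 1 := fun n => lt_of_lt_of_le one_pos (le_max_right _ _)
  have hen : ∀ n, ‖e n‖ ≤ 1 := by
    intro n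
    rw [he]
    simp only [norm_smul, norm_inv, Real.norm_eq_abs, abs_of_pos (hmax n)]
    rw [inv_mul_le_iff₀ (hmax n), mul_one]
    exact le_max_left _ _
  have hub : ∀ n, ⟪y, e n⟫ ≤ ‖y‖ := fun n =>
    (real_inner_le_norm _ _).trans
      (by nlinarith [hen n, norm_nonneg y, norm_nonneg (e n)])
  have hbdd : BddAbove (Set.range fun n => ⟪y, e n⟫) := ⟨‖y‖, by rintro _ ⟨n, rfl⟩; exact hub n⟩
  refine le_antisymm ?_ (ciSup_le hub)
  rcases eq_or_ne y 0 with rfl | hy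
  · simp
  · have hy0 : 0 < ‖y‖ := norm_pos_iff.mpr hy
    refine le_of_forall_pos_le_add fun ε hε => ?_
    set δ : ℝ := min (ε / (2 * ‖y‖)) 1 with hδdef
    have hδpos : 0 < δ := lt_min (div_pos hε (by positivity)) one_pos
    have hδ1 : δ ≤ 1 := min_le_right _ _
    set v : U := ‖y‖⁻¹ • y with hv
    have hvnorm : ‖v‖ = 1 := by
      rw [hv, norm_smul, norm_inv, Real.norm_eq_abs, abs_of_pos hy0,
        inv_mul_cancel₀ (ne_of_gt hy0)]
    obtain ⟨n, hn⟩ := hd.exists_dist_lt v hδpos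
    have hdn : ‖d n - v‖ < δ := by rw [← dist_eq_norm, dist_comm]; exact hn
    have hdn_ub : ‖d n‖ ≤ 1 + δ := by
      have h := norm_sub_norm_le (d n) v
      rw [hvnorm] at h
      linarith
    have hminv : (max ‖d n‖ 1) * (max ‖d n‖ 1)⁻¹ = 1 := mul_inv_cancel₀ (ne_of_gt (hmax n))
    have hmaxub : max ‖d n‖ 1 ≤ 1 + δ := max_le hdn_ub (by linarith)
    have h1 : ‖e n - d n‖ ≤ δ := by
      have heq : e n - d n = ((max ‖d n‖ 1)⁻¹ - 1) • d n := by rw [he]; rw [sub_smul, one_smul]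
      rw [heq, norm_smul, Real.norm_eq_abs]
      have hinvle : (max ‖d n‖ 1)⁻¹ ≤ 1 := inv_le_one_of_one_le₀ (le_max_right _ _)
      rw [abs_of_nonpos (by linarith)]
      have hd_le : ‖d n‖ ≤ max ‖d n‖ 1 := le_max_left _ _
      nlinarith [inv_pos.2 (hmax n), norm_nonneg (d n)]
    have h2 : ‖e n - v‖ ≤ 2 * δ := by
      have htr : ‖e n - v‖ ≤ ‖e n - d n‖ + ‖d n - v‖ := by
        have : e n - v = (e n - d n) + (d n - v) := by abel
        rw [this]; exact norm_add_le _ _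
      linarith
    have h3 : ⟪y, v⟫ = ‖y‖ := by
      rw [hv, real_inner_smul_right, real_inner_self_eq_norm_sq]
      field_simp
    have h4 : ⟪y, e n⟫ ≥ ‖y‖ - 2 * δ * ‖y‖ := by
      have hi := real_inner_le_norm y (v - e n)
      rw [inner_sub_right] at hi
      have hns : ‖v - e n‖ = ‖e n - v‖ := norm_sub_rev _ _
      nlinarith [norm_nonneg y]
    have h5 : 2 * δ * ‖y‖ ≤ ε := by
      have : δ ≤ ε / (2 * ‖y‖) := min_le_left _ _
      rw [le_div_iff₀ (by positivity)] at this
      nlinarith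
    have h6 : ⟪y, e n⟫ ≤ ⨆ m, ⟪y, e m⟫ := le_ciSup hbdd n
    linarith

lemma measurable_of_inner_meas {α : Type*} [MeasurableSpace α] {U : Type*} [NormedAddCommGroup U]
    [InnerProductSpace ℝ U] [TopologicalSpace.SeparableSpace U]
    [MeasurableSpace U] [BorelSpace U]
    (G : α → U) (h : ∀ v : U, Measurable fun t => ⟪G t, v⟫) : Measurable G := by
  haveI : Nonempty U := ⟨0⟩
  set d := TopologicalSpace.denseSeq U with hdd
  have hd : DenseRange d := TopologicalSpace.denseRange_denseSeq U
  have hnorm : ∀ c : U, Measurable fun t => ‖G t - c‖ := by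
    intro c
    have heq : (fun t => ‖G t - c‖)
        = fun t => ⨆ n, (⟪G t, (max ‖d n‖ 1)⁻¹ • d n⟫ - ⟪c, (max ‖d n‖ 1)⁻¹ • d n⟫) := by
      funext t
      rw [norm_eq_ciSup_inner d hd]
      congr 1
      funext n
      rw [inner_sub_left]
    rw [heq]
    exact Measurable.iSup fun n => (h _).sub measurable_const
  apply measurable_of_isOpen
  intro s hs
  have hcover : s = ⋃ p : ℕ × ℚ, ⋃ (_ : Metric.ball (d p.1) (p.2 : ℝ) ⊆ s),
      Metric.ball (d p.1) (p.2 : ℝ) := by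
    apply Set.Subset.antisymm
    · intro x hx
      obtain ⟨r, hr, hball⟩ := Metric.isOpen_iff.1 hs x hx
      obtain ⟨q, hq0, hq⟩ := exists_rat_btwn (half_pos hr)
      have hq0' : (0:ℝ) < q := hq0
      obtain ⟨n, hn⟩ := hd.exists_dist_lt x hq0'
      refine Set.mem_iUnion.2 ⟨(n, q), Set.mem_iUnion.2 ⟨?_, ?_⟩⟩
      · intro w hw
        apply hball
        rw [Metric.mem_ball] at hw ⊢
        have htr : dist w x ≤ dist w (d n) + dist (d n) x := dist_triangle _ _ _
        rw [dist_comm (d n) x] at htr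
        have : dist w x < q + q := by linarith
        linarith
      · rw [Metric.mem_ball]; exact hn
    · intro x hx
      simp only [Set.mem_iUnion] at hx
      obtain ⟨p, hsub, hx⟩ := hx
      exact hsub hx
  rw [hcover, Set.preimage_iUnion]
  refine MeasurableSet.iUnion fun p => ?_
  rw [Set.preimage_iUnion]
  refine MeasurableSet.iUnion fun hsub => ?_
  have hpre : G ⁻¹' Metric.ball (d p.1) (p.2 : ℝ) = {t | ‖G t - d p.1‖ < (p.2 : ℝ)} := by
    ext t
    simp [Metric.mem_ball, dist_eq_norm]
  rw [hpre]
  exact measurableSet_lt (hnorm _) measurable_const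

/-- if for every `λ > 0` and `x ∈ X` there is `z_λ(x)` with
`λ z_λ(x) + B_τ(J(z_λ(x))) = λx`, `‖z_λ(x)‖ ≤ ‖x‖` and `‖z_λ(x)‖ → 0` as `λ → 0⁺`,
then the linear system is approximately controllable on `[0,τ]`. -/
theorem stmt_11
    {X U : Type*} [NormedAddCommGroup X] [NormedSpace ℝ X] [CompleteSpace X]
    [TopologicalSpace.SeparableSpace X]
    [NormedAddCommGroup U] [InnerProductSpace ℝ U] [CompleteSpace U]
    [TopologicalSpace.SeparableSpace U]
    -- X is reflexive
    (hrefl : Function.Surjective (NormedSpace.inclusionInDoubleDual ℝ X))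
    (τ : ℝ) (hτ : 0 < τ)
    (B : U →L[ℝ] X)
    (R : ℝ → ℝ → X →L[ℝ] X)
    -- strong continuity of (t,s) ↦ R(t,s)x on the triangle 0 ≤ s ≤ t ≤ τ
    (hR_strong : ∀ x : X, ContinuousOn (fun p : ℝ × ℝ => R p.1 p.2 x)
      {p : ℝ × ℝ | 0 ≤ p.2 ∧ p.2 ≤ p.1 ∧ p.1 ≤ τ})
    -- uniform boundedness in operator norm
    (MR : ℝ) (hMR : ∀ t s : ℝ, 0 ≤ s → s ≤ t → t ≤ τ → ‖R t s‖ ≤ MR)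
    (x₀ : X)
    -- J is a duality mapping of X
    (J : X → StrongDual ℝ X)
    (hJ_id : ∀ x : X, J x x = ‖x‖ ^ 2)
    (hJ_norm : ∀ x : X, ‖J x‖ = ‖x‖)
    -- B* x* is the Riesz representative of u ↦ ⟨x*, Bu⟩
    (Bstar : StrongDual ℝ X → U)
    (hBstar : ∀ (φ : StrongDual ℝ X) (u : U), ⟪Bstar φ, u⟫ = φ (B u))
    -- the controllability Gramian B_τ
    (Btau : StrongDual ℝ X → X)
    (hBtau : ∀ φ : StrongDual ℝ X,
      Btau φ = ∫ t in Set.Icc (0:ℝ) τ, R τ t (B (Bstar (φ.comp (R τ t)))))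
    -- the resolvent-type solutions z_λ(x) of λz + B_τ(J z) = λx
    (z : ℝ → X → X)
    (hz_sol : ∀ lam : ℝ, 0 < lam → ∀ x : X,
      lam • z lam x + Btau (J (z lam x)) = lam • x)
    (hz_bound : ∀ lam : ℝ, 0 < lam → ∀ x : X, ‖z lam x‖ ≤ ‖x‖)
    (hz_tendsto : ∀ x : X,
      Filter.Tendsto (fun lam : ℝ => ‖z lam x‖) (nhdsWithin 0 (Set.Ioi 0)) (nhds 0)) :
    Dense {y : X | ∃ u : Lp U 2 ((volume : Measure ℝ).restrict (Set.Icc 0 τ)),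
      y = R τ 0 x₀ +
        ∫ s, R τ s (B (u s)) ∂((volume : Measure ℝ).restrict (Set.Icc 0 τ))} := by
  letI : MeasurableSpace U := borel U
  haveI : BorelSpace U := ⟨rfl⟩
  haveI : SecondCountableTopology U := UniformSpace.secondCountable_of_separable U
  haveI : IsFiniteMeasure ((volume : Measure ℝ).restrict (Set.Icc 0 τ)) := by
    constructor
    rw [Measure.restrict_apply_univ, Real.volume_Icc]
    exact ENNReal.ofReal_lt_top
  -- Bstar of a scalar multiple
  have hBsmul : ∀ (c : ℝ) (χ : StrongDual ℝ X), Bstar (c • χ) = c • Bstar χ := by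
    intro c χ
    apply ext_inner_right ℝ
    intro u
    rw [hBstar, real_inner_smul_left, hBstar]
    simp
  -- norm bound for Bstar
  have hBstar_norm : ∀ χ : StrongDual ℝ X, ‖Bstar χ‖ ≤ ‖χ‖ * ‖B‖ := by
    intro χ
    rcases eq_or_lt_of_le (norm_nonneg (Bstar χ)) with h0 | hpos
    · rw [← h0]; positivity
    · have h1 : ‖Bstar χ‖ ^ 2 = χ (B (Bstar χ)) := by
        rw [← hBstar, real_inner_self_eq_norm_sq]
      have h2 : χ (B (Bstar χ)) ≤ ‖χ‖ * ‖B (Bstar χ)‖ := by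
        calc χ (B (Bstar χ)) ≤ ‖χ (B (Bstar χ))‖ := le_abs_self _
          _ ≤ ‖χ‖ * ‖B (Bstar χ)‖ := χ.le_opNorm _
      have h3 : ‖B (Bstar χ)‖ ≤ ‖B‖ * ‖Bstar χ‖ := B.le_opNorm _
      nlinarith [norm_nonneg χ, norm_nonneg B]
  -- the clamped time map
  set cl : ℝ → ℝ := fun t => max 0 (min t τ) with hcl
  have hcl_cont : Continuous cl := continuous_const.max (continuous_id.min continuous_const)
  have hcl_mem : ∀ t, 0 ≤ cl t ∧ cl t ≤ τ := fun t =>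
    ⟨le_max_left _ _, max_le hτ.le (min_le_right _ _)⟩
  have hcl_eq : ∀ s ∈ Set.Icc (0:ℝ) τ, cl s = s := by
    intro s hs
    rw [hcl]
    simp only [min_eq_left hs.2, max_eq_right hs.1]
  have hRc : ∀ w : X, Continuous fun t => R τ (cl t) w := by
    intro w
    exact (hR_strong w).comp_continuous (continuous_const.prodMk hcl_cont)
      (fun t => ⟨(hcl_mem t).1, (hcl_mem t).2, le_rfl⟩)
  have hMR0 : (0:ℝ) ≤ MR := le_trans (norm_nonneg (R τ τ)) (hMR τ τ hτ.le le_rfl le_rfl)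
  rw [Metric.dense_iff]
  intro y ε hε
  set x : X := y - R τ 0 x₀ with hx
  have hev : ∀ᶠ lam in nhdsWithin (0:ℝ) (Set.Ioi 0), ‖z lam x‖ < ε :=
    (hz_tendsto x).eventually (gt_mem_nhds hε)
  obtain ⟨lam, hlam_small, hlam_mem⟩ := (hev.and eventually_mem_nhdsWithin).exists
  have hlam_pos : 0 < lam := hlam_mem
  set ψ : StrongDual ℝ X := J (z lam x) with hψ
  set φ : StrongDual ℝ X := lam⁻¹ • ψ with hφ
  set G : ℝ → U := fun t => Bstar (φ.comp (R τ (cl t))) with hG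
  -- measurability of G
  have hGmeas : Measurable G := by
    apply measurable_of_inner_meas
    intro v
    have heq : (fun t => ⟪G t, v⟫) = fun t => φ (R τ (cl t) (B v)) := by
      funext t
      rw [hG, hBstar]
      rfl
    rw [heq]
    exact (φ.continuous.comp (hRc (B v))).measurable
  -- boundedness of G
  have hGbound : ∀ t, ‖G t‖ ≤ ‖φ‖ * MR * ‖B‖ := by
    intro t
    calc ‖G t‖ ≤ ‖φ.comp (R τ (cl t))‖ * ‖B‖ := hBstar_norm _
      _ ≤ (‖φ‖ * ‖R τ (cl t)‖) * ‖B‖ := by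
          exact mul_le_mul_of_nonneg_right (φ.opNorm_comp_le _) (norm_nonneg B)
      _ ≤ ‖φ‖ * MR * ‖B‖ := by
          have h := hMR τ (cl t) (hcl_mem t).1 (hcl_mem t).2 le_rfl
          gcongr
  have hG2 : MemLp G 2 ((volume : Measure ℝ).restrict (Set.Icc 0 τ)) :=
    MemLp.of_bound hGmeas.aestronglyMeasurable _ (Filter.Eventually.of_forall hGbound)
  set u : Lp U 2 ((volume : Measure ℝ).restrict (Set.Icc 0 τ)) := hG2.toLp G with hu
  have hu_ae : (u : ℝ → U) =ᵐ[(volume : Measure ℝ).restrict (Set.Icc 0 τ)] G :=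
    hG2.coeFn_toLp
  -- the key integral identity
  have key : (∫ s, R τ s (B (u s)) ∂((volume : Measure ℝ).restrict (Set.Icc 0 τ)))
      = x - z lam x := by
    have h1 : (∫ s, R τ s (B (u s)) ∂((volume : Measure ℝ).restrict (Set.Icc 0 τ)))
        = ∫ s, R τ s (B (G s)) ∂((volume : Measure ℝ).restrict (Set.Icc 0 τ)) := by
      refine integral_congr_ae (hu_ae.mono fun s hs => ?_)
      simp only [hs]
    have h2 : ∀ s ∈ Set.Icc (0:ℝ) τ,
        R τ s (B (G s)) = lam⁻¹ • R τ s (B (Bstar (ψ.comp (R τ s)))) := by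
      intro s hs
      have hGs : G s = lam⁻¹ • Bstar (ψ.comp (R τ s)) := by
        rw [hG]
        simp only
        rw [hcl_eq s hs, hφ, ContinuousLinearMap.smul_comp, hBsmul]
      rw [hGs, _root_.map_smul, _root_.map_smul]
    have h3 : (∫ s, R τ s (B (G s)) ∂((volume : Measure ℝ).restrict (Set.Icc 0 τ)))
        = lam⁻¹ • ∫ s, R τ s (B (Bstar (ψ.comp (R τ s))))
            ∂((volume : Measure ℝ).restrict (Set.Icc 0 τ)) := by
      rw [← integral_smul]
      refine integral_congr_ae ?_
      filter_upwards [ae_restrict_mem measurableSet_Icc] with s hs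
      exact h2 s hs
    have h4 : Btau ψ = lam • x - lam • z lam x := eq_sub_of_add_eq' (hz_sol lam hlam_pos x)
    rw [h1, h3, ← hBtau, h4, smul_sub, smul_smul, smul_smul,
      inv_mul_cancel₀ (ne_of_gt hlam_pos), one_smul, one_smul]
  refine ⟨y - z lam x, Metric.mem_ball.2 ?_, ⟨u, ?_⟩⟩
  · rw [dist_eq_norm]
    simpa using hlam_small
  · rw [key, hx]
    abel
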